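/- arXiv:1603.01687 — 3 statements merged into one kernel-verified Lean document; each statement's English description precedes it below -/
import Mathlib

section
/- The set π is a compact subset of ℝⁿ; moreover, for every nonzero map m : {1,…,n} → {−1,0,1}, the cell Δ_m is either entirely contained in π or disjoint from π, so that π is the union of exactly those cells Δ_m that intersect π. -/
open Finset

/-- The degree of vertex `i`, as a real number. -/
noncomputable def dd {n : ℕ} (G : SimpleGraph (Fin n)) [DecidableRel G.Adj] (i : Fin n) : ℝ :=
  (G.degree i : ℝ)

/-- The weighted 1-norm `‖x‖_{1,d} = Σ_i d_i |x_i|`. -/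
noncomputable def norm1d {n : ℕ} (G : SimpleGraph (Fin n)) [DecidableRel G.Adj]
    (x : Fin n → ℝ) : ℝ :=
  ∑ i, dd G i * |x i|

/-- `δ₊(x) = Σ_{i : x_i > 0} d_i`. -/
noncomputable def deltaP {n : ℕ} (G : SimpleGraph (Fin n)) [DecidableRel G.Adj]
    (x : Fin n → ℝ) : ℝ :=
  ∑ i, if 0 < x i then dd G i else 0

/-- `δ₋(x) = Σ_{i : x_i < 0} d_i`. -/
noncomputable def deltaM {n : ℕ} (G : SimpleGraph (Fin n)) [DecidableRel G.Adj]
    (x : Fin n → ℝ) : ℝ :=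
  ∑ i, if x i < 0 then dd G i else 0

/-- `δ₀(x) = Σ_{i : x_i = 0} d_i`. -/
noncomputable def delta0 {n : ℕ} (G : SimpleGraph (Fin n)) [DecidableRel G.Adj]
    (x : Fin n → ℝ) : ℝ :=
  ∑ i, if x i = 0 then dd G i else 0

/-- `δ = Σ_i d_i`. -/
noncomputable def deltaTot {n : ℕ} (G : SimpleGraph (Fin n)) [DecidableRel G.Adj] : ℝ :=
  ∑ i, dd G i

/-- The set `X = {x : ‖x‖_{1,d} = 1}`. -/
def Xset {n : ℕ} (G : SimpleGraph (Fin n)) [DecidableRel G.Adj] : Set (Fin n → ℝ) :=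
  {x | norm1d G x = 1}

/-- The feasible set `π = {x ∈ X : |δ₊(x) − δ₋(x)| ≤ δ₀(x)}`. -/
def piSet {n : ℕ} (G : SimpleGraph (Fin n)) [DecidableRel G.Adj] : Set (Fin n → ℝ) :=
  {x | norm1d G x = 1 ∧ |deltaP G x - deltaM G x| ≤ delta0 G x}

/-- The cell `Δ_m` associated with a sign vector `m : {1,…,n} → {−1,0,1}`:
all `x ∈ X` with `Σ_i d_i m(i) x_i = 1` and `m(i) x_i > 0` whenever `m(i) ≠ 0`. -/
def cell {n : ℕ} (G : SimpleGraph (Fin n)) [DecidableRel G.Adj] (m : Fin n → ℤ) :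
    Set (Fin n → ℝ) :=
  {x | norm1d G x = 1 ∧ (∑ i, dd G i * (m i : ℝ) * x i) = 1 ∧
    ∀ i, m i ≠ 0 → 0 < (m i : ℝ) * x i}

section Aux
variable {n : ℕ} (G : SimpleGraph (Fin n)) [DecidableRel G.Adj]

lemma dd_nonneg (i : Fin n) : 0 ≤ dd G i := Nat.cast_nonneg _

lemma continuous_norm1d : Continuous (norm1d G) := by
  apply continuous_finset_sum
  exact fun i _ => continuous_const.mul ((continuous_apply i).abs)

lemma deltaP_mono {x y : Fin n → ℝ} (h : ∀ i, 0 < x i → 0 < y i) :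
    deltaP G x ≤ deltaP G y := by
  apply Finset.sum_le_sum
  intro i _
  by_cases hx : 0 < x i
  · simp [hx, h i hx]
  · simp only [hx, if_false]
    split_ifs <;> simp [dd_nonneg G i]

lemma isOpen_deltaP_gt (c : ℝ) : IsOpen {x : Fin n → ℝ | c < deltaP G x} := by
  rw [isOpen_iff_forall_mem_open]
  intro x hx
  refine ⟨{y | ∀ i, 0 < x i → 0 < y i}, ?_, ?_, ?_⟩
  · intro y hy
    exact lt_of_lt_of_le hx (deltaP_mono G hy)
  · have : {y : Fin n → ℝ | ∀ i, 0 < x i → 0 < y i} =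
        ⋂ i, {y : Fin n → ℝ | 0 < x i → 0 < y i} := by
      ext y; simp [Set.mem_iInter]
    rw [this]
    apply isOpen_iInter_of_finite
    intro i
    by_cases hxi : 0 < x i
    · have : {y : Fin n → ℝ | 0 < x i → 0 < y i} = {y | 0 < y i} := by
        ext y; simp [hxi]
      rw [this]
      exact isOpen_lt continuous_const (continuous_apply i)
    · have : {y : Fin n → ℝ | 0 < x i → 0 < y i} = Set.univ := by
        ext y; simp [hxi]
      rw [this]; exact isOpen_univ
  · exact fun i hi => hi

lemma deltaM_eq (x : Fin n → ℝ) : deltaM G x = deltaP G (-x) := by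
  unfold deltaM deltaP
  apply Finset.sum_congr rfl
  intro i _
  have : x i < 0 ↔ 0 < (-x) i := by simp
  simp only [this]

lemma isOpen_deltaM_gt (c : ℝ) : IsOpen {x : Fin n → ℝ | c < deltaM G x} := by
  have : {x : Fin n → ℝ | c < deltaM G x} = (fun x => -x) ⁻¹' {x | c < deltaP G x} := by
    ext x; simp [deltaM_eq]
  rw [this]
  exact (isOpen_deltaP_gt G c).preimage continuous_neg

lemma delta_sum (x : Fin n → ℝ) :
    deltaP G x + deltaM G x + delta0 G x = deltaTot G := by
  unfold deltaP deltaM delta0 deltaTot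
  rw [← Finset.sum_add_distrib, ← Finset.sum_add_distrib]
  apply Finset.sum_congr rfl
  intro i _
  rcases lt_trichotomy (x i) 0 with h | h | h
  · simp [h, not_lt.mpr h.le, h.ne]
  · simp [h]
  · simp [h, not_lt.mpr h.le, h.ne']

lemma piSet_iff (x : Fin n → ℝ) :
    x ∈ piSet G ↔ norm1d G x = 1 ∧ 2 * deltaP G x ≤ deltaTot G ∧ 2 * deltaM G x ≤ deltaTot G := by
  have hs := delta_sum G x
  constructor
  · rintro ⟨h1, h2⟩
    rw [abs_le] at h2
    exact ⟨h1, by linarith [h2.1, h2.2], by linarith [h2.1, h2.2]⟩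
  · rintro ⟨h1, h2, h3⟩
    exact ⟨h1, abs_le.mpr ⟨by linarith, by linarith⟩⟩

lemma compact_piSet (hd : ∀ i, 0 < dd G i) : IsCompact (piSet G) := by
  apply Metric.isCompact_of_isClosed_isBounded
  · have heq : piSet G = norm1d G ⁻¹' {1} ∩
        ({x | deltaTot G / 2 < deltaP G x} ∪ {x | deltaTot G / 2 < deltaM G x})ᶜ := by
      ext x
      rw [piSet_iff]
      simp only [Set.mem_inter_iff, Set.mem_preimage, Set.mem_singleton_iff, Set.mem_compl_iff,
        Set.mem_union, Set.mem_setOf_eq, not_or, not_lt]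
      constructor
      · rintro ⟨h1, h2, h3⟩; exact ⟨h1, by linarith, by linarith⟩
      · rintro ⟨h1, h2, h3⟩; exact ⟨h1, by linarith, by linarith⟩
    rw [heq]
    exact ((isClosed_singleton.preimage (continuous_norm1d G))).inter
      (((isOpen_deltaP_gt G _).union (isOpen_deltaM_gt G _)).isClosed_compl)
  · rw [isBounded_iff_forall_norm_le]
    refine ⟨∑ j, (dd G j)⁻¹, ?_⟩
    intro x hx
    have hC : (0:ℝ) ≤ ∑ j, (dd G j)⁻¹ :=
      Finset.sum_nonneg fun j _ => inv_nonneg.mpr (dd_nonneg G j)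
    rw [pi_norm_le_iff_of_nonneg hC]
    intro i
    have h1 : dd G i * |x i| ≤ 1 := by
      rw [← hx.1]
      apply Finset.single_le_sum (f := fun j => dd G j * |x j|) _ (Finset.mem_univ i)
      exact fun j _ => mul_nonneg (dd_nonneg G j) (abs_nonneg _)
    have h2 : |x i| ≤ (dd G i)⁻¹ := by
      rw [inv_eq_one_div, le_div_iff₀ (hd i)]
      linarith [h1, mul_comm (dd G i) |x i|]
    calc ‖x i‖ = |x i| := rfl
    _ ≤ (dd G i)⁻¹ := h2
    _ ≤ ∑ j, (dd G j)⁻¹ := Finset.single_le_sum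
        (fun j _ => inv_nonneg.mpr (dd_nonneg G j)) (Finset.mem_univ i)

end Aux

section Aux2
variable {n : ℕ} (G : SimpleGraph (Fin n)) [DecidableRel G.Adj]

lemma cell_mul_eq_abs (hd : ∀ i, 0 < dd G i) {m : Fin n → ℤ}
    (hm : ∀ i, m i = -1 ∨ m i = 0 ∨ m i = 1) {x : Fin n → ℝ}
    (hx : x ∈ cell G m) (i : Fin n) : (m i : ℝ) * x i = |x i| := by
  obtain ⟨h1, h2, _⟩ := hx
  have hle : ∀ j ∈ Finset.univ, dd G j * (m j : ℝ) * x j ≤ dd G j * |x j| := by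
    intro j _
    have hj : (m j : ℝ) * x j ≤ |x j| := by
      rcases hm j with h | h | h <;> rw [h] <;> push_cast <;>
        [linarith [neg_abs_le (x j)]; simp [abs_nonneg]; linarith [le_abs_self (x j)]]
    calc dd G j * (m j:ℝ) * x j = dd G j * ((m j:ℝ) * x j) := by ring
    _ ≤ dd G j * |x j| := mul_le_mul_of_nonneg_left hj (dd_nonneg G j)
  have hsum : (∑ j, dd G j * (m j : ℝ) * x j) = ∑ j, dd G j * |x j| := by
    rw [h2]; exact h1.symm
  have heq := (Finset.sum_eq_sum_iff_of_le hle).mp hsum i (Finset.mem_univ i)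
  have : dd G i * ((m i : ℝ) * x i) = dd G i * |x i| := by
    rw [← mul_assoc]; exact heq
  exact mul_left_cancel₀ (hd i).ne' this

lemma cell_sign (hd : ∀ i, 0 < dd G i) {m : Fin n → ℤ}
    (hm : ∀ i, m i = -1 ∨ m i = 0 ∨ m i = 1) {x : Fin n → ℝ}
    (hx : x ∈ cell G m) (i : Fin n) :
    (0 < x i ↔ m i = 1) ∧ (x i < 0 ↔ m i = -1) ∧ (x i = 0 ↔ m i = 0) := by
  have habs := cell_mul_eq_abs G hd hm hx i
  have h3 := hx.2.2 i
  rcases hm i with h | h | h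
  · have hneg : x i < 0 := by
      have := h3 (by rw [h]; decide)
      rw [h] at this; push_cast at this; linarith
    refine ⟨?_, ?_, ?_⟩ <;> constructor <;> intro hh <;> first
      | exact h | linarith | (exfalso; omega) | (exfalso; linarith) | (exfalso; rw [hh] at hneg; linarith)
  · have hzero : x i = 0 := by
      rw [h] at habs; push_cast at habs
      have : |x i| = 0 := by linarith
      exact abs_eq_zero.mp this
    refine ⟨?_, ?_, ?_⟩ <;> constructor <;> intro hh <;> first
      | exact h | exact hzero | (exfalso; rw [hzero] at hh; linarith) | (exfalso; omega)
  · have hpos : 0 < x i := by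
      have := h3 (by rw [h]; decide)
      rw [h] at this; push_cast at this; linarith
    refine ⟨?_, ?_, ?_⟩ <;> constructor <;> intro hh <;> first
      | exact h | exact hpos | (exfalso; omega) | (exfalso; linarith) | (exfalso; rw [hh] at hpos; linarith)

lemma cell_deltas (hd : ∀ i, 0 < dd G i) {m : Fin n → ℤ}
    (hm : ∀ i, m i = -1 ∨ m i = 0 ∨ m i = 1) {x : Fin n → ℝ}
    (hx : x ∈ cell G m) :
    deltaP G x = (∑ i, if m i = 1 then dd G i else 0) ∧
    deltaM G x = (∑ i, if m i = -1 then dd G i else 0) ∧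
    delta0 G x = (∑ i, if m i = 0 then dd G i else 0) := by
  have hs := cell_sign G hd hm hx
  refine ⟨?_, ?_, ?_⟩ <;> apply Finset.sum_congr rfl <;> intro i _
  · exact if_congr (hs i).1 rfl rfl
  · exact if_congr (hs i).2.1 rfl rfl
  · exact if_congr (hs i).2.2 rfl rfl

lemma cell_dichotomy (hd : ∀ i, 0 < dd G i) {m : Fin n → ℤ}
    (hm : ∀ i, m i = -1 ∨ m i = 0 ∨ m i = 1) :
    cell G m ⊆ piSet G ∨ cell G m ∩ piSet G = ∅ := by
  by_cases hne : (cell G m ∩ piSet G).Nonempty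
  · left
    obtain ⟨y, hyc, hyp⟩ := hne
    intro x hxc
    obtain ⟨hP, hM, h0⟩ := cell_deltas G hd hm hxc
    obtain ⟨hP', hM', h0'⟩ := cell_deltas G hd hm hyc
    refine ⟨hxc.1, ?_⟩
    rw [hP, hM, h0, ← hP', ← hM', ← h0']
    exact hyp.2
  · right; exact Set.not_nonempty_iff_eq_empty.mp hne

end Aux2

/-- `π` is compact; each cell `Δ_m` (for a nonzero map `m : {1,…,n} → {−1,0,1}`) is either
contained in `π` or disjoint from it; and `π` is the union of exactly those cells that
intersect `π`. -/
theorem stmt2 {n : ℕ} (G : SimpleGraph (Fin n)) [DecidableRel G.Adj]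
    (hd : ∀ i, 0 < dd G i) :
    IsCompact (piSet G) ∧
    (∀ m : Fin n → ℤ, (∀ i, m i = -1 ∨ m i = 0 ∨ m i = 1) → m ≠ 0 →
      (cell G m ⊆ piSet G ∨ cell G m ∩ piSet G = ∅)) ∧
    piSet G = ⋃₀ {C | ∃ m : Fin n → ℤ, (∀ i, m i = -1 ∨ m i = 0 ∨ m i = 1) ∧ m ≠ 0 ∧
      C = cell G m ∧ (cell G m ∩ piSet G).Nonempty} := by
  refine ⟨compact_piSet G hd, fun m hm _ => cell_dichotomy G hd hm, ?_⟩
  apply Set.Subset.antisymm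
  · intro x hx
    set m : Fin n → ℤ := fun i => if 0 < x i then 1 else if x i < 0 then -1 else 0 with hmdef
    have hm : ∀ i, m i = -1 ∨ m i = 0 ∨ m i = 1 := by
      intro i; simp only [hmdef]; split_ifs <;> simp
    have habs : ∀ i, (m i : ℝ) * x i = |x i| := by
      intro i; simp only [hmdef]
      rcases lt_trichotomy (x i) 0 with h | h | h
      · rw [if_neg (by linarith), if_pos h, abs_of_neg h]; push_cast; ring
      · simp [h]
      · rw [if_pos h, abs_of_pos h]; push_cast; ring
    have hxc : x ∈ cell G m := by
      refine ⟨hx.1, ?_, ?_⟩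
      · rw [← hx.1]
        apply Finset.sum_congr rfl
        intro i _
        rw [mul_assoc, habs i]
      · intro i hi
        rw [habs i]
        simp only [hmdef] at hi
        rcases lt_trichotomy (x i) 0 with h | h | h
        · rw [abs_of_neg h]; linarith
        · exfalso; apply hi; rw [if_neg (by simp [h]), if_neg (by simp [h])]
        · rw [abs_of_pos h]; linarith
    have hmne : m ≠ 0 := by
      intro h0
      have hall : ∀ i, x i = 0 := by
        intro i
        have : m i = 0 := by rw [h0]; rfl
        simp only [hmdef] at this
        by_contra hne
        rcases lt_trichotomy (x i) 0 with h | h | h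
        · rw [if_neg (by linarith), if_pos h] at this; omega
        · exact hne h
        · rw [if_pos h] at this; omega
      have : norm1d G x = 0 := by
        unfold norm1d
        apply Finset.sum_eq_zero
        intro i _; rw [hall i]; simp
      rw [hx.1] at this; norm_num at this
    exact ⟨cell G m, ⟨m, hm, hmne, rfl, ⟨x, hxc, hx⟩⟩, hxc⟩
  · intro x hx
    obtain ⟨C, ⟨m, hm, _, rfl, hne⟩, hxC⟩ := hx
    rcases cell_dichotomy G hd hm with hsub | hdisj
    · exact hsub hxC
    · exact absurd hdisj (by rw [← Set.not_nonempty_iff_eq_empty]; exact fun h => h hne)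
end

section
/- If (μ, x) is an eigenpair of the graph 1-Laplacian Δ₁, then I(x) = μ; moreover, if μ ≠ 0, then there exist θ_i ∈ Sgn(x_i) for each i such that Σ_i d_i θ_i = 0 (i.e., 0 ∈ Σ_i d_i Sgn(x_i)). -/
open Finset

/-- The set-valued sign: `Sgn(t) = {1}` if `t > 0`, `{−1}` if `t < 0`, `[−1,1]` if `t = 0`. -/
noncomputable def sgnSet (t : ℝ) : Set ℝ :=
  if 0 < t then {1} else if t < 0 then {-1} else Set.Icc (-1) 1

/-- `(μ, x)` is an eigenpair of the graph 1-Laplacian `Δ₁`: `x ∈ X` and there exist reals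
`z_{ij}` for adjacent pairs with `z_{ij} ∈ Sgn(x_i − x_j)`, `z_{ji} = −z_{ij}`, and
`Σ_{j∼i} z_{ij} ∈ μ d_i Sgn(x_i)` for every vertex `i`. -/
noncomputable def IsEigenpair {n : ℕ} (G : SimpleGraph (Fin n)) [DecidableRel G.Adj]
    (μ : ℝ) (x : Fin n → ℝ) : Prop :=
  norm1d G x = 1 ∧
  ∃ z : Fin n → Fin n → ℝ,
    (∀ i j, G.Adj i j → z i j ∈ sgnSet (x i - x j)) ∧
    (∀ i j, G.Adj i j → z j i = - z i j) ∧
    (∀ i, ∃ s ∈ sgnSet (x i), (∑ j ∈ G.neighborFinset i, z i j) = μ * dd G i * s)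

/-- `I(x) = (1/2) Σ_{i,j} a_{ij} |x_i − x_j|`, with `a` the adjacency matrix. -/
noncomputable def Ifun {n : ℕ} (G : SimpleGraph (Fin n)) [DecidableRel G.Adj]
    (x : Fin n → ℝ) : ℝ :=
  (1 / 2) * ∑ i, ∑ j, (if G.Adj i j then (1 : ℝ) else 0) * |x i - x j|


lemma sgn_mul {s t : ℝ} (h : s ∈ sgnSet t) : s * t = |t| := by
  unfold sgnSet at h
  split_ifs at h with h1 h2
  · rw [Set.mem_singleton_iff] at h; subst h; rw [abs_of_pos h1]; ring
  · rw [Set.mem_singleton_iff] at h; subst h; rw [abs_of_neg h2]; ring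
  · have ht : t = 0 := le_antisymm (not_lt.1 h1) (not_lt.1 h2)
    simp [ht]

lemma antisym_sum_zero {n : ℕ} (f : Fin n → Fin n → ℝ)
    (h : ∀ i j, f j i = - f i j) : ∑ i, ∑ j, f i j = 0 := by
  have h1 : ∑ i, ∑ j, f i j = ∑ i, ∑ j, f j i := Finset.sum_comm
  have h2 : ∑ i, ∑ j, f j i = - ∑ i, ∑ j, f i j := by
    have : ∀ i j, f j i = -(f i j) := h
    calc ∑ i, ∑ j, f j i = ∑ i, ∑ j, -(f i j) :=
          Finset.sum_congr rfl fun i _ => Finset.sum_congr rfl fun j _ => h i j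
      _ = - ∑ i, ∑ j, f i j := by simp
  linarith [h1, h2]

/-- If `(μ, x)` is an eigenpair of `Δ₁`, then `I(x) = μ`; moreover if `μ ≠ 0` there exist
`θ_i ∈ Sgn(x_i)` with `Σ_i d_i θ_i = 0`, i.e. `0 ∈ Σ_i d_i Sgn(x_i)`. -/
theorem stmt9 {n : ℕ} (G : SimpleGraph (Fin n)) [DecidableRel G.Adj]
    (hd : ∀ i, 0 < dd G i) (μ : ℝ) (x : Fin n → ℝ) (hpair : IsEigenpair G μ x) :
    Ifun G x = μ ∧
    (μ ≠ 0 → ∃ θ : Fin n → ℝ, (∀ i, θ i ∈ sgnSet (x i)) ∧ (∑ i, dd G i * θ i) = 0) := by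
  obtain ⟨hxnorm, z, hz1, hz2, hz3⟩ := hpair
  choose s hs hsum using hz3
  have hrow : ∀ i, (∑ j ∈ G.neighborFinset i, z i j) = ∑ j, (if G.Adj i j then z i j else 0) := by
    intro i
    rw [SimpleGraph.neighborFinset_eq_filter, Finset.sum_filter]
  -- key1 : the weighted sum equals μ
  have key1 : ∑ i, ∑ j, (if G.Adj i j then (1:ℝ) else 0) * (x i * z i j) = μ := by
    have hrow2 : ∀ i, ∑ j, (if G.Adj i j then (1:ℝ) else 0) * (x i * z i j)
        = μ * (dd G i * |x i|) := by
      intro i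
      have e1 : ∑ j, (if G.Adj i j then (1:ℝ) else 0) * (x i * z i j)
          = x i * ∑ j, (if G.Adj i j then z i j else 0) := by
        rw [Finset.mul_sum]
        refine Finset.sum_congr rfl fun j _ => ?_
        split_ifs <;> ring
      rw [e1, ← hrow, hsum i]
      have e2 := sgn_mul (hs i)
      calc x i * (μ * dd G i * s i) = μ * (dd G i * (s i * x i)) := by ring
        _ = μ * (dd G i * |x i|) := by rw [e2]
    calc ∑ i, ∑ j, (if G.Adj i j then (1:ℝ) else 0) * (x i * z i j)
        = ∑ i, μ * (dd G i * |x i|) := Finset.sum_congr rfl fun i _ => hrow2 i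
      _ = μ * norm1d G x := by rw [norm1d, Finset.mul_sum]
      _ = μ := by rw [hxnorm, mul_one]
  -- Ifun = the weighted sum
  have keyI : Ifun G x = ∑ i, ∑ j, (if G.Adj i j then (1:ℝ) else 0) * (x i * z i j) := by
    set S := ∑ i, ∑ j, (if G.Adj i j then (1:ℝ) else 0) * (x i * z i j) with hS
    have hswap : S = ∑ i, ∑ j, (if G.Adj i j then (1:ℝ) else 0) * (x j * z j i) := by
      rw [hS, Finset.sum_comm]
      refine Finset.sum_congr rfl fun i _ => Finset.sum_congr rfl fun j _ => ?_
      by_cases h : G.Adj i j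
      · simp [h, h.symm]
      · have h' : ¬ G.Adj j i := fun hc => h hc.symm
        simp [h, h']
    have h2S : 2 * S = ∑ i, ∑ j, (if G.Adj i j then (1:ℝ) else 0) * |x i - x j| := by
      have : 2 * S = ∑ i, ∑ j, ((if G.Adj i j then (1:ℝ) else 0) * (x i * z i j)
          + (if G.Adj i j then (1:ℝ) else 0) * (x j * z j i)) := by
        simp_rw [Finset.sum_add_distrib]
        rw [← hS, ← hswap]; ring
      rw [this]
      refine Finset.sum_congr rfl fun i _ => Finset.sum_congr rfl fun j _ => ?_
      by_cases h : G.Adj i j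
      · have hzji := hz2 i j h
        have habs : z i j * (x i - x j) = |x i - x j| := sgn_mul (hz1 i j h)
        simp only [h, if_true, one_mul]
        rw [hzji]
        nlinarith [habs]
      · simp [h]
    rw [Ifun]
    linarith [h2S]
  constructor
  · rw [keyI, key1]
  · intro hμ
    refine ⟨s, hs, ?_⟩
    have hz0 : ∑ i, ∑ j, (if G.Adj i j then z i j else 0) = 0 := by
      apply antisym_sum_zero
      intro i j
      by_cases h : G.Adj i j
      · simp [h, h.symm, hz2 i j h]
      · have h' : ¬ G.Adj j i := fun hc => h hc.symm
        simp [h, h']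
    have hsum2 : ∑ i, ∑ j, (if G.Adj i j then z i j else 0) = μ * ∑ i, dd G i * s i := by
      rw [Finset.mul_sum]
      refine Finset.sum_congr rfl fun i _ => ?_
      rw [← hrow, hsum i]; ring
    have : μ * ∑ i, dd G i * s i = 0 := by rw [← hsum2, hz0]
    exact (mul_eq_zero.1 this).resolve_left hμ
end

section
/- Let G be connected with at least 2 vertices. Then there exists a Cheeger cut (A, Aᶜ) such that both the induced subgraph on A and the induced subgraph on Aᶜ are connected. -/
open Finset

/-- `vol(A) = Σ_{i∈A} d_i`. -/
noncomputable def volA {n : ℕ} (G : SimpleGraph (Fin n)) [DecidableRel G.Adj]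
    (A : Finset (Fin n)) : ℝ :=
  ∑ i ∈ A, dd G i

/-- `|∂A|`: the number of edges with one endpoint in `A` and the other in `Aᶜ`
(counted as ordered pairs `(i, j)` with `i ∈ A`, `j ∉ A`, `i ∼ j`). -/
def bdryCard {n : ℕ} (G : SimpleGraph (Fin n)) [DecidableRel G.Adj]
    (A : Finset (Fin n)) : ℕ :=
  (Finset.univ.filter (fun p : Fin n × Fin n => p.1 ∈ A ∧ p.2 ∉ A ∧ G.Adj p.1 p.2)).card

/-- The cut ratio `|∂S| / min(vol(S), vol(Sᶜ))`. -/
noncomputable def cutRatio {n : ℕ} (G : SimpleGraph (Fin n)) [DecidableRel G.Adj]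
    (S : Finset (Fin n)) : ℝ :=
  (bdryCard G S : ℝ) / min (volA G S) (volA G Sᶜ)

/-- The Cheeger constant `h(G)`: the minimum of the cut ratio over nonempty proper subsets. -/
noncomputable def cheegerConst {n : ℕ} (G : SimpleGraph (Fin n)) [DecidableRel G.Adj] : ℝ :=
  sInf {r : ℝ | ∃ S : Finset (Fin n), S.Nonempty ∧ S ≠ Finset.univ ∧ r = cutRatio G S}

/-- `(A, Aᶜ)` is a Cheeger cut: `A` is nonempty and proper and its cut ratio equals `h(G)`. -/
def IsCheegerCut {n : ℕ} (G : SimpleGraph (Fin n)) [DecidableRel G.Adj]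
    (A : Finset (Fin n)) : Prop :=
  A.Nonempty ∧ A ≠ Finset.univ ∧ cutRatio G A = cheegerConst G

/-- The subgraph of `G` induced on `A` is connected. -/
def IndConnected {n : ℕ} (G : SimpleGraph (Fin n)) (A : Finset (Fin n)) : Prop :=
  (G.induce (A : Set (Fin n))).Connected

section helpers

variable {n : ℕ} (G : SimpleGraph (Fin n)) [DecidableRel G.Adj]

lemma compl_nonempty_iff (s : Finset (Fin n)) : sᶜ.Nonempty ↔ s ≠ Finset.univ := by
  constructor
  · rintro ⟨x, hx⟩ rfl; simp at hx
  · intro h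
    rw [Finset.nonempty_iff_ne_empty]
    intro hc
    exact h (by simpa [Finset.compl_eq_empty_iff] using hc)

lemma volA_nonneg (A : Finset (Fin n)) : 0 ≤ volA G A :=
  Finset.sum_nonneg fun i _ => dd_nonneg G i

lemma volA_mono {A B : Finset (Fin n)} (h : A ⊆ B) : volA G A ≤ volA G B :=
  Finset.sum_le_sum_of_subset_of_nonneg h (fun i _ _ => dd_nonneg G i)

lemma volA_pos (hn : 2 ≤ n) (hG : G.Connected) {A : Finset (Fin n)} (hA : A.Nonempty) :
    0 < volA G A := by
  obtain ⟨v, hv⟩ := hA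
  have hdeg : 0 < G.degree v := by
    rw [G.degree_pos_iff_exists_adj]
    -- there is another vertex
    have hcard : 1 < Fintype.card (Fin n) := by rw [Fintype.card_fin]; omega
    obtain ⟨w, hw⟩ := Fintype.exists_ne_of_one_lt_card hcard v
    obtain ⟨p⟩ := hG.preconnected v w
    cases p with
    | nil => exact absurd rfl hw.symm
    | cons h q => exact ⟨_, h⟩
  have : (0:ℝ) < dd G v := by unfold dd; exact_mod_cast hdeg
  calc (0:ℝ) < dd G v := this
    _ ≤ volA G A := Finset.single_le_sum (fun i _ => dd_nonneg G i) hv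

lemma bdry_symm (A : Finset (Fin n)) : bdryCard G Aᶜ = bdryCard G A := by
  unfold bdryCard
  apply Finset.card_bij (fun p _ => Prod.swap p)
  · rintro ⟨a, b⟩ hp
    simp only [Finset.mem_filter, Finset.mem_univ, true_and, Finset.mem_compl] at hp ⊢
    exact ⟨by simpa using hp.2.1, by simpa using hp.1, hp.2.2.symm⟩
  · rintro ⟨a,b⟩ _ ⟨c,d⟩ _ h
    have := congrArg Prod.swap h
    simpa using this
  · rintro ⟨a, b⟩ hp
    refine ⟨(b, a), ?_, rfl⟩
    simp only [Finset.mem_filter, Finset.mem_univ, true_and, Finset.mem_compl] at hp ⊢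
    exact ⟨hp.2.1, by simpa using hp.1, hp.2.2.symm⟩

lemma cutRatio_symm (A : Finset (Fin n)) : cutRatio G Aᶜ = cutRatio G A := by
  unfold cutRatio
  rw [bdry_symm, compl_compl, min_comm]

-- reachability transfer
lemma reach_of_walk_support {S : Set (Fin n)} {u v : Fin n} (p : G.Walk u v)
    (hs : ∀ x ∈ p.support, x ∈ S) :
    (G.induce S).Reachable ⟨u, hs u p.start_mem_support⟩ ⟨v, hs v p.end_mem_support⟩ := by
  induction p with
  | nil => rfl
  | @cons a b c h q ih =>
    have hb : b ∈ S := hs b (by simp)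
    have := ih (fun x hx => hs x (by simp [hx]))
    exact (SimpleGraph.Adj.reachable (by exact h : (G.induce S).Adj ⟨a, _⟩ ⟨b, hb⟩)).trans this

lemma reach_mono {S T : Set (Fin n)} (hST : S ⊆ T) {u v : ↑S}
    (h : (G.induce S).Reachable u v) :
    (G.induce T).Reachable ⟨u.1, hST u.2⟩ ⟨v.1, hST v.2⟩ := by
  exact h.map ((SimpleGraph.induceHomOfLE G hST).toHom)

end helpers


open Classical in
lemma exists_piece {n : ℕ} (G : SimpleGraph (Fin n)) [DecidableRel G.Adj]
    {A : Finset (Fin n)} (hA : A.Nonempty) (hnc : ¬ IndConnected G A) :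
    ∃ C, C ⊆ A ∧ C ≠ A ∧ C.Nonempty ∧ IndConnected G C ∧
      (∀ u ∈ C, ∀ w, G.Adj u w → w ∈ A → w ∈ C) := by
  obtain ⟨v, hv⟩ := hA
  set C : Finset (Fin n) :=
    A.filter (fun u => ∃ p : G.Walk v u, ∀ x ∈ p.support, x ∈ A) with hCdef
  have hCsub : C ⊆ A := Finset.filter_subset _ _
  have hvC : v ∈ C := by
    refine Finset.mem_filter.mpr ⟨hv, ⟨SimpleGraph.Walk.nil, ?_⟩⟩
    intro x hx; simp at hx; subst hx; exact hv
  have hclosed : ∀ u ∈ C, ∀ w, G.Adj u w → w ∈ A → w ∈ C := by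
    intro u hu w hadj hwA
    obtain ⟨huA, p, hp⟩ := Finset.mem_filter.mp hu
    refine Finset.mem_filter.mpr ⟨hwA, ⟨p.concat hadj, ?_⟩⟩
    intro x hx
    rw [SimpleGraph.Walk.support_concat, List.mem_append] at hx
    rcases hx with hx | hx
    · exact hp x hx
    · simp at hx; subst hx; exact hwA
  -- supports of witnessing walks lie in C
  have hsupC : ∀ u ∈ C, ∃ p : G.Walk v u, ∀ x ∈ p.support, x ∈ C := by
    intro u hu
    obtain ⟨huA, p, hp⟩ := Finset.mem_filter.mp hu
    refine ⟨p, fun x hx => ?_⟩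
    refine Finset.mem_filter.mpr ⟨hp x hx, ⟨p.takeUntil x hx, fun y hy => ?_⟩⟩
    exact hp y (SimpleGraph.Walk.support_takeUntil_subset p hx hy)
  have hCconn : IndConnected G C := by
    rw [IndConnected, SimpleGraph.connected_iff]
    constructor
    · rintro ⟨a, ha⟩ ⟨b, hb⟩
      obtain ⟨pa, hpa⟩ := hsupC a (by exact ha)
      obtain ⟨pb, hpb⟩ := hsupC b (by exact hb)
      have wa := reach_of_walk_support G (S := (C : Set (Fin n))) pa
        (fun x hx => Finset.mem_coe.mpr (hpa x hx))
      have wb := reach_of_walk_support G (S := (C : Set (Fin n))) pb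
        (fun x hx => Finset.mem_coe.mpr (hpb x hx))
      exact wa.symm.trans wb
    · exact ⟨⟨v, Finset.mem_coe.mpr hvC⟩⟩
  have hCne : C ≠ A := by
    intro hEq
    apply hnc
    rw [IndConnected, SimpleGraph.connected_iff]
    constructor
    · rintro ⟨a, ha⟩ ⟨b, hb⟩
      have ha' : a ∈ C := hEq ▸ (Finset.mem_coe.mp ha)
      have hb' : b ∈ C := hEq ▸ (Finset.mem_coe.mp hb)
      obtain ⟨pa, hpa⟩ := hsupC a ha'
      obtain ⟨pb, hpb⟩ := hsupC b hb' 
      have wa := reach_of_walk_support G (S := (A : Set (Fin n))) pa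
        (fun x hx => Finset.mem_coe.mpr (hCsub (hpa x hx)))
      have wb := reach_of_walk_support G (S := (A : Set (Fin n))) pb
        (fun x hx => Finset.mem_coe.mpr (hCsub (hpb x hx)))
      exact wa.symm.trans wb
    · exact ⟨⟨v, Finset.mem_coe.mpr hv⟩⟩
  exact ⟨C, hCsub, hCne, ⟨v, hvC⟩, hCconn, hclosed⟩


lemma vol_split {n : ℕ} (G : SimpleGraph (Fin n)) [DecidableRel G.Adj]
    {C A : Finset (Fin n)} (hCA : C ⊆ A) :
    volA G A = volA G C + volA G (A \ C) := by
  unfold volA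
  rw [add_comm, ← Finset.sum_sdiff hCA]

lemma bdry_split {n : ℕ} (G : SimpleGraph (Fin n)) [DecidableRel G.Adj]
    {C A : Finset (Fin n)} (hCA : C ⊆ A)
    (hcl : ∀ u ∈ C, ∀ w, G.Adj u w → w ∈ A → w ∈ C) :
    bdryCard G A = bdryCard G C + bdryCard G (A \ C) := by
  unfold bdryCard
  rw [← Finset.card_union_of_disjoint]
  · congr 1
    ext ⟨a, b⟩
    simp only [Finset.mem_filter, Finset.mem_univ, true_and, Finset.mem_union,
      Finset.mem_sdiff]
    constructor
    · rintro ⟨haA, hbA, hadj⟩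
      by_cases hC : a ∈ C
      · exact Or.inl ⟨hC, fun hbC => hbA (hCA hbC), hadj⟩
      · exact Or.inr ⟨⟨haA, hC⟩, fun hb => hbA hb.1, hadj⟩
    · rintro (⟨haC, hbC, hadj⟩ | ⟨⟨haA, haC⟩, hbD, hadj⟩)
      · refine ⟨hCA haC, fun hbA => hbC (hcl a haC b hadj hbA), hadj⟩
      · refine ⟨haA, fun hbA => ?_, hadj⟩
        by_cases hbC : b ∈ C
        · exact haC (hcl b hbC a hadj.symm haA)
        · exact hbD ⟨hbA, hbC⟩
  · rw [Finset.disjoint_left]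
    rintro ⟨a, b⟩ h1 h2
    simp only [Finset.mem_filter, Finset.mem_univ, true_and, Finset.mem_sdiff] at h1 h2
    exact h2.1.2 h1.1

lemma L1 {n : ℕ} (G : SimpleGraph (Fin n)) [DecidableRel G.Adj]
    (hn : 2 ≤ n) (hG : G.Connected) :
    ∀ k, ∀ A : Finset (Fin n), A.card ≤ k → A.Nonempty →
      ∃ B, B ⊆ A ∧ B.Nonempty ∧ IndConnected G B ∧
        (∀ u ∈ B, ∀ w, G.Adj u w → w ∈ A → w ∈ B) ∧
        (bdryCard G B : ℝ) * volA G A ≤ (bdryCard G A : ℝ) * volA G B := by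
  intro k
  induction k with
  | zero =>
    intro A hcard hA
    exact absurd (Finset.card_pos.mpr hA) (by omega)
  | succ k ih =>
    intro A hcard hA
    by_cases hconn : IndConnected G A
    · exact ⟨A, Finset.Subset.refl A, hA, hconn, fun u hu w _ hw => hw, le_of_eq rfl⟩
    · obtain ⟨C, hCA, hCne, hCnonempty, hCconn, hCcl⟩ := exists_piece G hA hconn
      set D := A \ C with hD
      have hDA : D ⊆ A := Finset.sdiff_subset
      have hDnonempty : D.Nonempty := by
        rw [Finset.sdiff_nonempty]
        intro hsub
        exact hCne (Finset.Subset.antisymm hCA hsub)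
      have hvol : volA G A = volA G C + volA G D := vol_split G hCA
      have hbdry : bdryCard G A = bdryCard G C + bdryCard G D := bdry_split G hCA hCcl
      have hvC : 0 < volA G C := volA_pos G hn hG hCnonempty
      have hvD : 0 < volA G D := volA_pos G hn hG hDnonempty
      -- closure of D in A
      have hDcl : ∀ u ∈ D, ∀ w, G.Adj u w → w ∈ A → w ∈ D := by
        intro u hu w hadj hwA
        rw [hD, Finset.mem_sdiff] at hu ⊢
        refine ⟨hwA, fun hwC => hu.2 (hCcl w hwC u hadj.symm hu.1)⟩
      by_cases hcase : (bdryCard G C : ℝ) * volA G A ≤ (bdryCard G A : ℝ) * volA G C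
      · -- recurse into C
        have hCcard : C.card ≤ k := by
          have := Finset.card_lt_card (Finset.ssubset_iff_subset_ne.mpr ⟨hCA, hCne⟩)
          omega
        obtain ⟨B, hBC, hBne, hBconn, hBcl, hBineq⟩ := ih C hCcard hCnonempty
        refine ⟨B, hBC.trans hCA, hBne, hBconn, ?_, ?_⟩
        · intro u hu w hadj hwA
          exact hBcl u hu w hadj (hCcl u (hBC hu) w hadj hwA)
        · -- combine: bB * vC ≤ bC * vB, bC * vA ≤ bA * vC ⇒ bB * vA ≤ bA * vB
          have hvB : 0 ≤ volA G B := volA_nonneg G B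
          have hvA : 0 ≤ volA G A := volA_nonneg G A
          have hbB : (0:ℝ) ≤ (bdryCard G B : ℝ) := Nat.cast_nonneg _
          nlinarith [mul_le_mul_of_nonneg_right hBineq hvA,
            mul_le_mul_of_nonneg_right hcase hvB]
      · -- recurse into D
        push_neg at hcase
        have hDineq : (bdryCard G D : ℝ) * volA G A ≤ (bdryCard G A : ℝ) * volA G D := by
          have h1 : (bdryCard G A : ℝ) = (bdryCard G C : ℝ) + (bdryCard G D : ℝ) := by
            rw [hbdry]; push_cast; ring
          nlinarith [hcase, hvol, h1]
        have hDcard : D.card ≤ k := by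
          have hDssub : D ⊂ A := by
            rw [Finset.ssubset_iff_subset_ne]
            refine ⟨hDA, fun hEq => ?_⟩
            obtain ⟨c, hc⟩ := hCnonempty
            have : c ∈ D := hEq ▸ (hCA hc)
            rw [hD, Finset.mem_sdiff] at this
            exact this.2 hc
          have := Finset.card_lt_card hDssub
          omega
        obtain ⟨B, hBD, hBne, hBconn, hBcl, hBineq⟩ := ih D hDcard hDnonempty
        refine ⟨B, hBD.trans hDA, hBne, hBconn, ?_, ?_⟩
        · intro u hu w hadj hwA
          exact hBcl u hu w hadj (hDcl u (hBD hu) w hadj hwA)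
        · have hvB : 0 ≤ volA G B := volA_nonneg G B
          have hvA : 0 ≤ volA G A := volA_nonneg G A
          have hbB : (0:ℝ) ≤ (bdryCard G B : ℝ) := Nat.cast_nonneg _
          nlinarith [mul_le_mul_of_nonneg_right hBineq hvA,
            mul_le_mul_of_nonneg_right hDineq hvB]


lemma walk_reach {n : ℕ} (G : SimpleGraph (Fin n)) [DecidableRel G.Adj]
    {B C : Finset (Fin n)}
    (hCB : ∀ u ∈ C, u ∉ B)
    (hCcl : ∀ u ∈ C, ∀ w, G.Adj u w → w ∉ B → w ∈ C)
    {x b : Fin n} (p : G.Walk x b) :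
    b ∈ B → x ∉ C →
      ∃ y, y ∈ B ∧ ∀ (hx : x ∈ ((Cᶜ : Finset (Fin n)) : Set (Fin n)))
        (hy : y ∈ ((Cᶜ : Finset (Fin n)) : Set (Fin n))),
        (G.induce ((Cᶜ : Finset (Fin n)) : Set (Fin n))).Reachable ⟨x, hx⟩ ⟨y, hy⟩ := by
  induction p with
  | nil =>
    intro hb _
    exact ⟨_, hb, fun hx hy => SimpleGraph.Reachable.refl _⟩
  | @cons a z c h q ih =>
    intro hb haC
    by_cases haB : a ∈ B
    · exact ⟨a, haB, fun hx hy => SimpleGraph.Reachable.refl _⟩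
    · have hzC : z ∉ C := fun hzC => haC (hCcl z hzC a h.symm haB)
      obtain ⟨y, hyB, hr⟩ := ih hb hzC
      refine ⟨y, hyB, fun hx hy => ?_⟩
      have hz : z ∈ ((Cᶜ : Finset (Fin n)) : Set (Fin n)) := by simpa using hzC
      exact (SimpleGraph.Adj.reachable
        (by exact h : (G.induce ((Cᶜ : Finset (Fin n)) : Set (Fin n))).Adj ⟨a, hx⟩ ⟨z, hz⟩)).trans
        (hr hz hy)

lemma compl_connected {n : ℕ} (G : SimpleGraph (Fin n)) [DecidableRel G.Adj]
    (hG : G.Connected) {B C : Finset (Fin n)}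
    (hBne : B.Nonempty) (hBconn : IndConnected G B)
    (hCB : C ⊆ Bᶜ)
    (hCcl : ∀ u ∈ C, ∀ w, G.Adj u w → w ∈ Bᶜ → w ∈ C) :
    IndConnected G Cᶜ := by
  have hCB' : ∀ u ∈ C, u ∉ B := fun u hu => Finset.mem_compl.mp (hCB hu)
  have hCcl' : ∀ u ∈ C, ∀ w, G.Adj u w → w ∉ B → w ∈ C :=
    fun u hu w hadj hw => hCcl u hu w hadj (Finset.mem_compl.mpr hw)
  have hBCc : B ⊆ Cᶜ := fun b hb => Finset.mem_compl.mpr (fun hbC => hCB' b hbC hb)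
  obtain ⟨b0, hb0⟩ := hBne
  -- every vertex of Cᶜ reaches some vertex of B inside induce Cᶜ
  have key : ∀ (a : Fin n) (ha : a ∈ ((Cᶜ : Finset (Fin n)) : Set (Fin n))),
      ∃ y, ∃ hyB : y ∈ B, (G.induce ((Cᶜ : Finset (Fin n)) : Set (Fin n))).Reachable
        ⟨a, ha⟩ ⟨y, Finset.mem_coe.mpr (hBCc hyB)⟩ := by
    intro a ha
    have haC : a ∉ C := Finset.mem_compl.mp (Finset.mem_coe.mp ha)
    obtain ⟨p⟩ := hG.preconnected a b0
    obtain ⟨y, hyB, hr⟩ := walk_reach G hCB' hCcl' p hb0 haC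
    exact ⟨y, hyB, hr ha (Finset.mem_coe.mpr (hBCc hyB))⟩
  rw [IndConnected, SimpleGraph.connected_iff]
  constructor
  · rintro ⟨a, ha⟩ ⟨a', ha'⟩
    obtain ⟨y, hyB, hr⟩ := key a ha
    obtain ⟨y', hyB', hr'⟩ := key a' ha'
    have hyy' : (G.induce ((Cᶜ : Finset (Fin n)) : Set (Fin n))).Reachable
        ⟨y, Finset.mem_coe.mpr (hBCc hyB)⟩ ⟨y', Finset.mem_coe.mpr (hBCc hyB')⟩ := by
      have := hBconn.preconnected ⟨y, Finset.mem_coe.mpr hyB⟩ ⟨y', Finset.mem_coe.mpr hyB'⟩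
      exact reach_mono G (fun t ht => Finset.mem_coe.mpr (hBCc (Finset.mem_coe.mp ht))) this
    exact (hr.trans hyy').trans hr'.symm
  · exact ⟨⟨b0, Finset.mem_coe.mpr (hBCc hb0)⟩⟩


set_option maxHeartbeats 1000000 in
/-- For connected `G` with at least two vertices, there exists a Cheeger cut `(A, Aᶜ)` such
that both induced subgraphs on `A` and on `Aᶜ` are connected. -/
theorem stmt14 {n : ℕ} (G : SimpleGraph (Fin n)) [DecidableRel G.Adj]
    (hn : 2 ≤ n) (hG : G.Connected) :
    ∃ A : Finset (Fin n), IsCheegerCut G A ∧ IndConnected G A ∧ IndConnected G Aᶜ := by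
  classical
  have hfin : {r : ℝ | ∃ S : Finset (Fin n), S.Nonempty ∧ S ≠ Finset.univ ∧ r = cutRatio G S}.Finite := by
    apply Set.Finite.subset (Set.finite_range (cutRatio G))
    rintro r ⟨S, _, _, rfl⟩
    exact ⟨S, rfl⟩
  have hne : {r : ℝ | ∃ S : Finset (Fin n), S.Nonempty ∧ S ≠ Finset.univ ∧ r = cutRatio G S}.Nonempty := by
    have hprop : ({⟨0, by omega⟩} : Finset (Fin n)) ≠ Finset.univ := by
      intro hEq
      have h1 : (⟨1, by omega⟩ : Fin n) ∈ ({⟨0, by omega⟩} : Finset (Fin n)) :=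
        hEq ▸ Finset.mem_univ _
      rw [Finset.mem_singleton] at h1
      exact absurd (congrArg Fin.val h1) (by simp)
    exact ⟨_, ⟨{⟨0, by omega⟩}, ⟨_, Finset.mem_singleton_self _⟩, hprop, rfl⟩⟩
  have hmem : cheegerConst G ∈
      {r : ℝ | ∃ S : Finset (Fin n), S.Nonempty ∧ S ≠ Finset.univ ∧ r = cutRatio G S} :=
    Set.Nonempty.csInf_mem hne hfin
  have hlow : ∀ S : Finset (Fin n), S.Nonempty → S ≠ Finset.univ →
      cheegerConst G ≤ cutRatio G S := by
    intro S h1 h2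
    exact csInf_le hfin.bddBelow ⟨S, h1, h2, rfl⟩
  obtain ⟨S₀, hS₀ne, hS₀univ, hS₀eq⟩ := hmem
  -- WLOG min volume side
  obtain ⟨A₁, hA₁ne, hA₁univ, hA₁eq, hvle⟩ :
      ∃ A₁ : Finset (Fin n), A₁.Nonempty ∧ A₁ ≠ Finset.univ ∧
        cutRatio G A₁ = cheegerConst G ∧ volA G A₁ ≤ volA G A₁ᶜ := by
    rcases le_total (volA G S₀) (volA G S₀ᶜ) with hv | hv
    · exact ⟨S₀, hS₀ne, hS₀univ, hS₀eq.symm, hv⟩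
    · refine ⟨S₀ᶜ, (compl_nonempty_iff _).mpr hS₀univ, ?_, ?_, by rwa [compl_compl]⟩
      · intro hEq
        obtain ⟨v, hv'⟩ := hS₀ne
        have : v ∈ S₀ᶜ := hEq ▸ Finset.mem_univ v
        exact Finset.mem_compl.mp this hv'
      · rw [cutRatio_symm]; exact hS₀eq.symm
  have hA₁c_ne : A₁ᶜ.Nonempty := (compl_nonempty_iff _).mpr hA₁univ
  have hvA₁ : 0 < volA G A₁ := volA_pos G hn hG hA₁ne
  have hA₁ratio : (bdryCard G A₁ : ℝ) / volA G A₁ = cheegerConst G := by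
    rw [← hA₁eq]
    unfold cutRatio
    rw [min_eq_left hvle]
  -- Stage 1: connected min side B
  obtain ⟨B, hBA₁, hBne, hBconn, hBcl, hBineq⟩ := L1 G hn hG A₁.card A₁ le_rfl hA₁ne
  have hA₁cBc : A₁ᶜ ⊆ Bᶜ := fun x hx =>
    Finset.mem_compl.mpr (fun hxB => Finset.mem_compl.mp hx (hBA₁ hxB))
  have hBc_ne : Bᶜ.Nonempty := hA₁c_ne.mono hA₁cBc
  have hBuniv : B ≠ Finset.univ := (compl_nonempty_iff _).mp hBc_ne
  have hvB : 0 < volA G B := volA_pos G hn hG hBne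
  have hvBc : 0 < volA G Bᶜ := volA_pos G hn hG hBc_ne
  have hvBle : volA G B ≤ volA G Bᶜ :=
    (volA_mono G hBA₁).trans (hvle.trans (volA_mono G hA₁cBc))
  have hBdiv_le : (bdryCard G B : ℝ) / volA G B ≤ cheegerConst G := by
    rw [← hA₁ratio, div_le_div_iff₀ hvB hvA₁]
    exact hBineq
  have hcutB : cutRatio G B = (bdryCard G B : ℝ) / volA G B := by
    unfold cutRatio
    rw [min_eq_left hvBle]
  have hcutB_eq : cutRatio G B = cheegerConst G :=
    le_antisymm (hcutB ▸ hBdiv_le) (hlow B hBne hBuniv)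
  have hBdiv_eq : (bdryCard G B : ℝ) / volA G B = cheegerConst G := hcutB ▸ hcutB_eq
  -- Stage 2: connected piece C of Bᶜ
  obtain ⟨C, hCBc, hCne, hCconn, hCcl, hCineq⟩ := L1 G hn hG Bᶜ.card Bᶜ le_rfl hBc_ne
  have hbdryBc : bdryCard G Bᶜ = bdryCard G B := bdry_symm G B
  have hCcl' : ∀ u ∈ C, ∀ w, G.Adj u w → w ∈ Bᶜ → w ∈ C := hCcl
  have hBCc : B ⊆ Cᶜ := fun b hb =>
    Finset.mem_compl.mpr (fun hbC => Finset.mem_compl.mp (hCBc hbC) hb)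
  have hCc_ne : Cᶜ.Nonempty := hBne.mono hBCc
  have hCuniv : C ≠ Finset.univ := (compl_nonempty_iff _).mp hCc_ne
  have hvC : 0 < volA G C := volA_pos G hn hG hCne
  have hvCc : 0 < volA G Cᶜ := volA_pos G hn hG hCc_ne
  have hbC_le : (bdryCard G C : ℝ) ≤ (bdryCard G B : ℝ) := by
    have hsub : Finset.univ.filter (fun p : Fin n × Fin n => p.1 ∈ C ∧ p.2 ∉ C ∧ G.Adj p.1 p.2) ⊆
        Finset.univ.filter (fun p : Fin n × Fin n => p.1 ∈ Bᶜ ∧ p.2 ∉ Bᶜ ∧ G.Adj p.1 p.2) := by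
      rintro ⟨a, b⟩ hp
      simp only [Finset.mem_filter, Finset.mem_univ, true_and] at hp ⊢
      refine ⟨hCBc hp.1, fun hb => hp.2.1 (hCcl' a hp.1 b hp.2.2 hb), hp.2.2⟩
    have := Finset.card_le_card hsub
    rw [show (Finset.univ.filter (fun p : Fin n × Fin n => p.1 ∈ Bᶜ ∧ p.2 ∉ Bᶜ ∧ G.Adj p.1 p.2)).card
        = bdryCard G Bᶜ from rfl, hbdryBc] at this
    exact_mod_cast this
  have hcutC_le : cutRatio G C ≤ cheegerConst G := by
    unfold cutRatio
    rcases le_total (volA G C) (volA G Cᶜ) with hcc | hcc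
    · rw [min_eq_left hcc, ← hBdiv_eq, div_le_div_iff₀ hvC hvB]
      calc (bdryCard G C : ℝ) * volA G B ≤ (bdryCard G C : ℝ) * volA G Bᶜ := by
            exact mul_le_mul_of_nonneg_left hvBle (Nat.cast_nonneg _)
        _ ≤ (bdryCard G Bᶜ : ℝ) * volA G C := hCineq
        _ = (bdryCard G B : ℝ) * volA G C := by rw [hbdryBc]
    · rw [min_eq_right hcc, ← hBdiv_eq, div_le_div_iff₀ hvCc hvB]
      have hvBCc : volA G B ≤ volA G Cᶜ := volA_mono G hBCc
      exact mul_le_mul hbC_le hvBCc (le_of_lt hvB) (Nat.cast_nonneg _)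
  have hcutC_eq : cutRatio G C = cheegerConst G := le_antisymm hcutC_le (hlow C hCne hCuniv)
  refine ⟨C, ⟨hCne, hCuniv, hcutC_eq⟩, hCconn, ?_⟩
  exact compl_connected G hG hBne hBconn hCBc hCcl'
end
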